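/- arXiv:0902.1042 — 3 statements merged into one kernel-verified Lean document; each statement's English description precedes it below -/
import Mathlib

section
/- If a language L ⊆ (Σ×{0,1})^ω is recognized by a deterministic max-automaton, then UL is recognized by a deterministic guarded max-automaton. -/
namespace MaxReg

/-! ### Counter operations and boolean combinations -/

inductive CounterOp (C : Type) where
  | inc (c : C)
  | reset (c : C)
  | output (c : C)
  | maxOp (c d : C)

def applyOp {C : Type} [DecidableEq C] (v : C → ℕ) :
    CounterOp C → (C → ℕ) × Option (C × ℕ)
  | .inc c => (Function.update v c (v c + 1), none)
  | .reset c => (Function.update v c 0, none)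
  | .output c => (v, some (c, v c))
  | .maxOp c d => (Function.update v c (max (v c) (v d)), none)

def applyOps {C : Type} [DecidableEq C] :
    List (CounterOp C) → (C → ℕ) → (C → ℕ) × List (C × ℕ)
  | [], v => (v, [])
  | op :: ops, v =>
      let p := applyOp v op
      let r := applyOps ops p.1
      (r.1, p.2.toList ++ r.2)

/-- Boolean combinations with atoms in `σ` (used for acceptance conditions:
the atom `c` stands for "the sequence of values output on counter `c` is bounded"). -/
inductive BC (σ : Type) where
  | tt
  | atom (a : σ)
  | nt (φ : BC σ)
  | an (φ ψ : BC σ)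

def BC.eval {σ : Type} (f : σ → Prop) : BC σ → Prop
  | .tt => True
  | .atom a => f a
  | .nt φ => ¬ φ.eval f
  | .an φ ψ => φ.eval f ∧ ψ.eval f

/-! ### Deterministic max-automata -/

structure MaxAutomaton (α : Type) where
  Q : Type
  C : Type
  [finQ : Fintype Q]
  [finC : Fintype C]
  [decC : DecidableEq C]
  init : Q
  δ : Q → α → Q × List (CounterOp C)
  acc : BC C

attribute [instance] MaxAutomaton.finQ MaxAutomaton.finC MaxAutomaton.decC

namespace MaxAutomaton

variable {α : Type} (A : MaxAutomaton α)

/-- The state at position `n` of the unique run on `w`, started in state `q`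
(at position `0`). -/
def runFrom (q : A.Q) (w : ℕ → α) : ℕ → A.Q
  | 0 => q
  | n + 1 => (A.δ (runFrom q w n) (w n)).1

/-- Counter values before reading the letter at position `n` (all counters start at `0`). -/
def valsFrom (q : A.Q) (w : ℕ → α) : ℕ → (A.C → ℕ)
  | 0 => fun _ => 0
  | n + 1 => (applyOps (A.δ (A.runFrom q w n) (w n)).2 (valsFrom q w n)).1

/-- The (counter, value) pairs output while reading the letter at position `n`. -/
def outsFrom (q : A.Q) (w : ℕ → α) (n : ℕ) : List (A.C × ℕ) :=
  (applyOps (A.δ (A.runFrom q w n) (w n)).2 (A.valsFrom q w n)).2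

/-- "The sequence `ρ_c` of values output on counter `c` is bounded." -/
def BoundedFrom (q : A.Q) (w : ℕ → α) (c : A.C) : Prop :=
  ∃ B, ∀ n, ∀ p ∈ A.outsFrom q w n, p.1 = c → p.2 ≤ B

def AcceptsFrom (q : A.Q) (w : ℕ → α) : Prop :=
  A.acc.eval (A.BoundedFrom q w)

def Accepts (w : ℕ → α) : Prop := A.AcceptsFrom A.init w

def Lang : Set (ℕ → α) := { w | A.Accepts w }

/-- One step on a configuration (state, counter valuation), for reading finite words. -/
def stepList (p : A.Q × (A.C → ℕ)) (a : α) : A.Q × (A.C → ℕ) :=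
  ((A.δ p.1 a).1, (applyOps (A.δ p.1 a).2 p.2).1)

/-- Configuration (state, counter valuation) reached after reading a finite word
from the initial state with all counters `0`. -/
def readConfig (l : List α) : A.Q × (A.C → ℕ) :=
  l.foldl A.stepList (A.init, fun _ => 0)

end MaxAutomaton

/-! ### Annotating words with sets -/

/-- `w[X]` : extend each letter of `w` with the bit `1` exactly at the positions in `X`. -/
def withSet {α : Type} (w : ℕ → α) (X : Finset ℕ) : ℕ → α × Bool :=
  fun n => (w n, decide (n ∈ X))

/-- `w[X₁,…,Xₙ]` : extend each letter of `w` with a bit vector. -/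
def withSets {α : Type} {n : ℕ} (w : ℕ → α) (Xs : Fin n → Finset ℕ) :
    ℕ → α × (Fin n → Bool) :=
  fun m => (w m, fun i => decide (m ∈ Xs i))

/-- Annotate a finite word with a set of positions. -/
def encodeList {α : Type} (l : List α) (X : Finset ℕ) : List (α × Bool) :=
  l.zipIdx.map (fun p => (p.1, decide (p.2 ∈ X)))

/-- `UL` : the words `w` such that `w[X] ∈ L` for arbitrarily large finite sets `X`. -/
def UL {α : Type} (L : Set (ℕ → α × Bool)) : Set (ℕ → α) :=
  { w | ∀ n : ℕ, ∃ X : Finset ℕ, n ≤ X.card ∧ withSet w X ∈ L }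

/-- `max(q, l)` : maximal cardinality of a set `X` of positions of `l` such that `A`
reaches state `q` after reading `l[X]` (and `0` if there is no such set). -/
noncomputable def maxReach {α : Type} (A : MaxAutomaton (α × Bool)) (q : A.Q)
    (l : List α) : ℕ :=
  sSup { k | ∃ X : Finset ℕ, (∀ x ∈ X, x < l.length) ∧ X.card = k ∧
    (A.readConfig (encodeList l X)).1 = q }

def suffixFrom {α : Type} (w : ℕ → α) (n : ℕ) : ℕ → α := fun k => w (n + k)

def prefixList {α : Type} (w : ℕ → α) (n : ℕ) : List α := (List.range n).map w

/-! ### WMSO+U and MSO+U formulas -/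

inductive Formula (α : Type) where
  | letter (a : α) (x : ℕ)
  | mem (x X : ℕ)
  | le (x y : ℕ)
  | not (φ : Formula α)
  | and (φ ψ : Formula α)
  | exFO (x : ℕ) (φ : Formula α)
  | exSO (X : ℕ) (φ : Formula α)
  | U (X : ℕ) (φ : Formula α)

/-- Weak semantics: set variables range over finite sets of positions. -/
def Sat {α : Type} (w : ℕ → α) (v1 : ℕ → ℕ) (v2 : ℕ → Finset ℕ) :
    Formula α → Prop
  | .letter a x => w (v1 x) = a
  | .mem x X => v1 x ∈ v2 X
  | .le x y => v1 x ≤ v1 y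
  | .not φ => ¬ Sat w v1 v2 φ
  | .and φ ψ => Sat w v1 v2 φ ∧ Sat w v1 v2 ψ
  | .exFO x φ => ∃ k : ℕ, Sat w (Function.update v1 x k) v2 φ
  | .exSO X φ => ∃ S : Finset ℕ, Sat w v1 (Function.update v2 X S) φ
  | .U X φ => ∀ n : ℕ, ∃ S : Finset ℕ, n ≤ S.card ∧
      Sat w v1 (Function.update v2 X S) φ

/-- Full semantics: set variables range over arbitrary subsets of ℕ; the
unbounding quantifier still speaks about finite sets. -/
def SatFull {α : Type} (w : ℕ → α) (v1 : ℕ → ℕ) (v2 : ℕ → Set ℕ) :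
    Formula α → Prop
  | .letter a x => w (v1 x) = a
  | .mem x X => v1 x ∈ v2 X
  | .le x y => v1 x ≤ v1 y
  | .not φ => ¬ SatFull w v1 v2 φ
  | .and φ ψ => SatFull w v1 v2 φ ∧ SatFull w v1 v2 ψ
  | .exFO x φ => ∃ k : ℕ, SatFull w (Function.update v1 x k) v2 φ
  | .exSO X φ => ∃ S : Set ℕ, SatFull w v1 (Function.update v2 X S) φ
  | .U X φ => ∀ n : ℕ, ∃ S : Finset ℕ, n ≤ S.card ∧
      SatFull w v1 (Function.update v2 X (↑S : Set ℕ)) φ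

def freeFO {α : Type} : Formula α → Finset ℕ
  | .letter _ x => {x}
  | .mem x _ => {x}
  | .le x y => {x, y}
  | .not φ => freeFO φ
  | .and φ ψ => freeFO φ ∪ freeFO ψ
  | .exFO x φ => freeFO φ \ {x}
  | .exSO _ φ => freeFO φ
  | .U _ φ => freeFO φ

def freeSO {α : Type} : Formula α → Finset ℕ
  | .letter _ _ => ∅
  | .mem _ X => {X}
  | .le _ _ => ∅
  | .not φ => freeSO φ
  | .and φ ψ => freeSO φ ∪ freeSO ψ
  | .exFO _ φ => freeSO φ
  | .exSO X φ => freeSO φ \ {X}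
  | .U X φ => freeSO φ \ {X}

def Sentence {α : Type} (φ : Formula α) : Prop :=
  freeFO φ = ∅ ∧ freeSO φ = ∅

/-- `L` is definable by a sentence of WMSO+U. -/
def DefinableW {α : Type} (L : Set (ℕ → α)) : Prop :=
  ∃ φ : Formula α, Sentence φ ∧
    L = { w | Sat w (fun _ => 0) (fun _ => (∅ : Finset ℕ)) φ }

/-- `L` is definable by a sentence of full MSO+U. -/
def DefinableF {α : Type} (L : Set (ℕ → α)) : Prop :=
  ∃ φ : Formula α, Sentence φ ∧
    L = { w | SatFull w (fun _ => 0) (fun _ => (∅ : Set ℕ)) φ }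

/-- `φ` contains no occurrence of the unbounding quantifier. -/
def UFree {α : Type} : Formula α → Prop
  | .letter _ _ => True
  | .mem _ _ => True
  | .le _ _ => True
  | .not φ => UFree φ
  | .and φ ψ => UFree φ ∧ UFree ψ
  | .exFO _ φ => UFree φ
  | .exSO _ φ => UFree φ
  | .U _ _ => False

/-- Boolean combinations of formulas `U X. φ` with `φ` free of the unbounding
quantifier. -/
inductive IsUNormal {α : Type} : Formula α → Prop
  | base (X : ℕ) (φ : Formula α) : UFree φ → IsUNormal (.U X φ)
  | not {φ : Formula α} : IsUNormal φ → IsUNormal (.not φ)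
  | and {φ ψ : Formula α} : IsUNormal φ → IsUNormal ψ →
      IsUNormal (.and φ ψ)

/-! ### Deterministic Muller automata -/

structure MullerAutomaton (α : Type) where
  Q : Type
  [finQ : Fintype Q]
  init : Q
  δ : Q → α → Q
  F : Set (Set Q)

attribute [instance] MullerAutomaton.finQ

namespace MullerAutomaton

variable {α : Type} (M : MullerAutomaton α)

def run (w : ℕ → α) : ℕ → M.Q
  | 0 => M.init
  | n + 1 => M.δ (run w n) (w n)

/-- States occurring infinitely often in the run on `w`. -/
def InfOcc (w : ℕ → α) : Set M.Q :=
  { q | ∀ n : ℕ, ∃ m, n ≤ m ∧ M.run w m = q }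

def Lang : Set (ℕ → α) := { w | M.InfOcc w ∈ M.F }

end MullerAutomaton

/-! ### Partial runs, convergence, spanning sets -/

section PartialRuns

variable {Q α : Type}

/-- State at position `n + k` of the run seeded at configuration `(q, n)`. -/
def runSeed (δ : Q → α → Q) (w : ℕ → α) (q : Q) (n : ℕ) : ℕ → Q
  | 0 => q
  | k + 1 => δ (runSeed δ w q n k) (w (n + k))

/-- The partial run seeded at configuration `(q, n)`. -/
def seeded (δ : Q → α → Q) (w : ℕ → α) (q : Q) (n : ℕ) : ℕ → Option Q :=
  fun m => if _h : n ≤ m then some (runSeed δ w q n (m - n)) else none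

/-- A partial run over `w`: either the nowhere-defined run or a seeded run. -/
def IsPartialRun (δ : Q → α → Q) (w : ℕ → α) (ρ : ℕ → Option Q) : Prop :=
  ρ = (fun _ => none) ∨ ∃ q n, ρ = seeded δ w q n

/-- Two partial runs converge if they agree from some position on. -/
def Converge (ρ₁ ρ₂ : ℕ → Option Q) : Prop :=
  ∃ N : ℕ, ∀ m, N ≤ m → ρ₁ m = ρ₂ m

/-- A set of partial runs spans `w` if every partial run over `w` converges with
some member of the set. -/
def Spans (δ : Q → α → Q) (w : ℕ → α) (S : Set (ℕ → Option Q)) : Prop :=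
  ∀ ρ, IsPartialRun δ w ρ → ∃ ρ' ∈ S, Converge ρ ρ'

end PartialRuns

/-! ### Deterministic letter-to-letter transducers -/

structure Transducer (α β : Type) where
  Q : Type
  [finQ : Fintype Q]
  init : Q
  δ : Q → α → Q
  out : Q → α → β

attribute [instance] Transducer.finQ

namespace Transducer

variable {α β : Type} (T : Transducer α β)

def run (w : ℕ → α) : ℕ → T.Q
  | 0 => T.init
  | n + 1 => T.δ (run w n) (w n)

/-- The function `Σ^ω → Γ^ω` computed by the transducer. -/
def f (w : ℕ → α) : ℕ → β := fun n => T.out (T.run w n) (w n)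

end Transducer

open Classical in
/-- Decode a word over `Q × {0,1}` as a partial run: position `m` is defined (with the
state recorded at `m`) iff all markers from position `m` on are `1`. -/
noncomputable def decode {Q : Type} (u : ℕ → Q × Bool) : ℕ → Option Q :=
  fun m => if (∀ j, m ≤ j → (u j).2 = true) then some (u m).1 else none

/-! ### Guarded max-automata -/

inductive GOp (C α : Type) where
  | inc (c : C)
  | reset (c : C)
  | output (c : C)
  | maxOp (c d : C)
  /-- `if G then output c` : output the value of `c` only if the suffix of the input
  beginning at the next position belongs to `G`. -/
  | goutput (G : Set (ℕ → α)) (c : C)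

open Classical in
noncomputable def applyGOp {C α : Type} [DecidableEq C] (suffix : ℕ → α)
    (v : C → ℕ) : GOp C α → (C → ℕ) × Option (C × ℕ)
  | .inc c => (Function.update v c (v c + 1), none)
  | .reset c => (Function.update v c 0, none)
  | .output c => (v, some (c, v c))
  | .maxOp c d => (Function.update v c (max (v c) (v d)), none)
  | .goutput G c => (v, if suffix ∈ G then some (c, v c) else none)

noncomputable def applyGOps {C α : Type} [DecidableEq C] (suffix : ℕ → α) :
    List (GOp C α) → (C → ℕ) → (C → ℕ) × List (C × ℕ)
  | [], v => (v, [])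
  | op :: ops, v =>
      let p := applyGOp suffix v op
      let r := applyGOps suffix ops p.1
      (r.1, p.2.toList ++ r.2)

def GOp.WF {C α : Type} : GOp C α → Prop
  | .goutput G _ => ∃ A : MaxAutomaton α, A.Lang = G
  | _ => True

structure GuardedMaxAutomaton (α : Type) where
  Q : Type
  C : Type
  [finQ : Fintype Q]
  [finC : Fintype C]
  [decC : DecidableEq C]
  init : Q
  δ : Q → α → Q × List (GOp C α)
  acc : BC C

attribute [instance] GuardedMaxAutomaton.finQ GuardedMaxAutomaton.finC
  GuardedMaxAutomaton.decC

namespace GuardedMaxAutomaton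

variable {α : Type} (B : GuardedMaxAutomaton α)

/-- All guards used by the automaton are languages recognized by deterministic
max-automata. -/
def WF : Prop := ∀ q a, ∀ op ∈ (B.δ q a).2, op.WF

def run (w : ℕ → α) : ℕ → B.Q
  | 0 => B.init
  | n + 1 => (B.δ (run w n) (w n)).1

noncomputable def vals (w : ℕ → α) : ℕ → (B.C → ℕ)
  | 0 => fun _ => 0
  | n + 1 =>
      (applyGOps (suffixFrom w (n + 1)) (B.δ (B.run w n) (w n)).2 (vals w n)).1

noncomputable def outs (w : ℕ → α) (n : ℕ) : List (B.C × ℕ) :=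
  (applyGOps (suffixFrom w (n + 1)) (B.δ (B.run w n) (w n)).2 (B.vals w n)).2

def Bounded (w : ℕ → α) (c : B.C) : Prop :=
  ∃ Bd, ∀ n, ∀ p ∈ B.outs w n, p.1 = c → p.2 ≤ Bd

def Accepts (w : ℕ → α) : Prop := B.acc.eval (B.Bounded w)

def Lang : Set (ℕ → α) := { w | B.Accepts w }

end GuardedMaxAutomaton

/-! ### Nondeterministic max-automata -/

structure NMaxAutomaton (α : Type) where
  Q : Type
  C : Type
  [finQ : Fintype Q]
  [finC : Fintype C]
  [decC : DecidableEq C]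
  init : Q
  δ : Q → α → Set (Q × List (CounterOp C))
  acc : BC C

attribute [instance] NMaxAutomaton.finQ NMaxAutomaton.finC NMaxAutomaton.decC

/-- Counter values along a sequence of counter-operation lists. -/
def nvals {C : Type} [DecidableEq C] (ops : ℕ → List (CounterOp C)) :
    ℕ → (C → ℕ)
  | 0 => fun _ => 0
  | n + 1 => (applyOps (ops n) (nvals ops n)).1

def nouts {C : Type} [DecidableEq C] (ops : ℕ → List (CounterOp C)) (n : ℕ) :
    List (C × ℕ) :=
  (applyOps (ops n) (nvals ops n)).2

namespace NMaxAutomaton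

variable {α : Type} (A : NMaxAutomaton α)

def Accepts (w : ℕ → α) : Prop :=
  ∃ (q : ℕ → A.Q) (ops : ℕ → List (CounterOp A.C)),
    q 0 = A.init ∧
    (∀ n, (q (n + 1), ops n) ∈ A.δ (q n) (w n)) ∧
    A.acc.eval (fun c => ∃ B, ∀ n, ∀ p ∈ nouts ops n, p.1 = c → p.2 ≤ B)

def Lang : Set (ℕ → α) := { w | A.Accepts w }

end NMaxAutomaton

/-! ### The separating language -/

/-- Position of the `k`-th letter `b` in `a^{ns 0} b a^{ns 1} b ⋯` (0-indexed). -/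
def bpos (ns : ℕ → ℕ) (k : ℕ) : ℕ := (∑ i ∈ Finset.range (k + 1), ns i) + k

/-- `L_sep` over the alphabet `{a, b}` (with `a = false`, `b = true`): words
`a^{n₁} b a^{n₂} b ⋯` such that some number appears infinitely often in `n₁, n₂, …`. -/
def Lsep : Set (ℕ → Bool) :=
  { w | ∃ ns : ℕ → ℕ,
      (∀ m, w m = true ↔ ∃ k, bpos ns k = m) ∧
      ∃ v, { i | ns i = v }.Infinite }

/-! ### Topological notions -/

/-- A `Σ₂` set: a countable union of closed sets. -/
def IsSigma2 {X : Type} [TopologicalSpace X] (S : Set X) : Prop :=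
  ∃ F : ℕ → Set X, (∀ n, IsClosed (F n)) ∧ S = ⋃ n, F n

/-- Boolean combinations of `Σ₂` sets. -/
inductive IsBoolCombSigma2 {X : Type} [TopologicalSpace X] : Set X → Prop
  | base {S : Set X} : IsSigma2 S → IsBoolCombSigma2 S
  | compl {S : Set X} : IsBoolCombSigma2 S → IsBoolCombSigma2 Sᶜ
  | inter {S T : Set X} : IsBoolCombSigma2 S → IsBoolCombSigma2 T →
      IsBoolCombSigma2 (S ∩ T)


/-! ### Auxiliary development -/

section AuxLists

lemma le_foldl_max_init {β : Type*} (f : β → ℕ) (l : List β) (m : ℕ) :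
    m ≤ l.foldl (fun x e => max x (f e)) m := by
  induction l generalizing m with
  | nil => simp
  | cons a t ih => exact le_trans (le_max_left _ _) (ih _)

lemma le_foldl_max_mem {β : Type*} (f : β → ℕ) (l : List β) (m : ℕ) :
    ∀ e ∈ l, f e ≤ l.foldl (fun x e => max x (f e)) m := by
  induction l generalizing m with
  | nil => simp
  | cons a t ih =>
    intro e he
    rcases List.mem_cons.1 he with h | h
    · subst h
      exact le_trans (le_max_right _ _) (le_foldl_max_init _ _ _)
    · exact ih _ e h

lemma foldl_max_achieved {β : Type*} (f : β → ℕ) (l : List β) (m : ℕ) :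
    l.foldl (fun x e => max x (f e)) m = m ∨
      ∃ e ∈ l, l.foldl (fun x e => max x (f e)) m = f e := by
  induction l generalizing m with
  | nil => left; rfl
  | cons a t ih =>
    rcases ih (max m (f a)) with h | ⟨e, he, h⟩
    · rcases Nat.le_total (f a) m with hm | hm
      · left
        simpa [max_eq_left hm] using h
      · right
        exact ⟨a, List.mem_cons_self, by simpa [max_eq_right hm] using h⟩
    · exact Or.inr ⟨e, List.mem_cons_of_mem _ he, h⟩

lemma snd_le_foldr_max (l : List (ℕ)) : ∀ x ∈ l, x ≤ l.foldr max 0 := by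
  induction l with
  | nil => simp
  | cons a t ih =>
    intro x hx
    rcases List.mem_cons.1 hx with h | h
    · subst h; exact le_max_left _ _
    · exact le_trans (ih x h) (le_max_right _ _)

lemma BC.eval_congr {σ : Type} {f g : σ → Prop} (h : ∀ a, f a ↔ g a) :
    ∀ φ : BC σ, φ.eval f ↔ φ.eval g := by
  intro φ
  induction φ with
  | tt => rfl
  | atom a => exact h a
  | nt φ ih => exact not_congr ih
  | an φ ψ ih1 ih2 => exact and_congr ih1 ih2

end AuxLists

section Shift

variable {β : Type} (A : MaxAutomaton β)

/-- Counter values with an arbitrary initial valuation. -/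
def valsV (q : A.Q) (v0 : A.C → ℕ) (u : ℕ → β) : ℕ → (A.C → ℕ)
  | 0 => v0
  | n + 1 => (applyOps (A.δ (A.runFrom q u n) (u n)).2 (valsV q v0 u n)).1

def outsV (q : A.Q) (v0 : A.C → ℕ) (u : ℕ → β) (n : ℕ) : List (A.C × ℕ) :=
  (applyOps (A.δ (A.runFrom q u n) (u n)).2 (valsV A q v0 u n)).2

lemma valsFrom_eq_valsV (q : A.Q) (u : ℕ → β) (n : ℕ) :
    A.valsFrom q u n = valsV A q (fun _ => 0) u n := by
  induction n with
  | zero => rfl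
  | succ n ih => simp [MaxAutomaton.valsFrom, valsV, ih]

lemma outsFrom_eq_outsV (q : A.Q) (u : ℕ → β) (n : ℕ) :
    A.outsFrom q u n = outsV A q (fun _ => 0) u n := by
  simp [MaxAutomaton.outsFrom, outsV, valsFrom_eq_valsV]

lemma runFrom_add (q : A.Q) (u : ℕ → β) (N : ℕ) :
    ∀ k, A.runFrom q u (N + k) =
      A.runFrom (A.runFrom q u N) (suffixFrom u N) k := by
  intro k
  induction k with
  | zero => rfl
  | succ k ih =>
    show A.runFrom q u (N + k + 1) = _
    simp only [MaxAutomaton.runFrom, ih]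
    rfl

lemma valsFrom_add (q : A.Q) (u : ℕ → β) (N : ℕ) :
    ∀ k, A.valsFrom q u (N + k) =
      valsV A (A.runFrom q u N) (A.valsFrom q u N) (suffixFrom u N) k := by
  intro k
  induction k with
  | zero => rfl
  | succ k ih =>
    show A.valsFrom q u (N + k + 1) = _
    simp only [MaxAutomaton.valsFrom, ih, valsV, runFrom_add]
    rfl

lemma outsFrom_add (q : A.Q) (u : ℕ → β) (N k : ℕ) :
    A.outsFrom q u (N + k) =
      outsV A (A.runFrom q u N) (A.valsFrom q u N) (suffixFrom u N) k := by
  simp only [MaxAutomaton.outsFrom, outsV, valsFrom_add, runFrom_add]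
  rfl

end Shift

section Rel

variable {C : Type} [DecidableEq C]

/-- Relation between output lists: same counters, values within `M`. -/
def OutRel (M : ℕ) (l l' : List (C × ℕ)) : Prop :=
  (∀ p ∈ l, ∃ p' ∈ l', p'.1 = p.1 ∧ p.2 ≤ p'.2) ∧
  (∀ p' ∈ l', ∃ p ∈ l, p.1 = p'.1 ∧ p'.2 ≤ p.2 + M)

def ValRel (M : ℕ) (v v' : C → ℕ) : Prop :=
  ∀ c, v c ≤ v' c ∧ v' c ≤ v c + M

lemma valRel_applyOp {M : ℕ} {v v' : C → ℕ} (h : ValRel M v v') (op : CounterOp C) :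
    ValRel M (applyOp v op).1 (applyOp v' op).1 := by
  intro c
  cases op with
  | inc d =>
    by_cases hc : c = d
    · subst hc
      simp only [applyOp, Function.update_self]
      have := h c; omega
    · simpa [applyOp, Function.update_of_ne hc] using h c
  | reset d =>
    by_cases hc : c = d
    · subst hc; simp [applyOp, Function.update_self]
    · simpa [applyOp, Function.update_of_ne hc] using h c
  | output d => exact h c
  | maxOp d e =>
    by_cases hc : c = d
    · subst hc
      simp only [applyOp, Function.update_self]
      constructor
      · exact max_le_max (h c).1 (h e).1
      · exact max_le (le_trans (h c).2 (by omega)) (le_trans (h e).2 (by omega))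
    · simpa [applyOp, Function.update_of_ne hc] using h c

lemma applyOps_rel {M : ℕ} :
    ∀ (ops : List (CounterOp C)) (v v' : C → ℕ), ValRel M v v' →
      ValRel M (applyOps ops v).1 (applyOps ops v').1 ∧
      OutRel M (applyOps ops v).2 (applyOps ops v').2 := by
  intro ops
  induction ops with
  | nil =>
    intro v v' h
    exact ⟨h, by simp [applyOps, OutRel]⟩
  | cons op tl ih =>
    intro v v' h
    have h1 := valRel_applyOp h op
    have h2 := ih _ _ h1
    refine ⟨by simpa [applyOps] using h2.1, ?_, ?_⟩
    · intro p hp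
      simp only [applyOps, List.mem_append] at hp ⊢
      rcases hp with hp | hp
      · cases op with
        | output d =>
          simp only [applyOp, Option.toList_some, List.mem_singleton] at hp
          subst hp
          exact ⟨(d, v' d), Or.inl (by simp [applyOp]), rfl, (h d).1⟩
        | inc d => simp [applyOp] at hp
        | reset d => simp [applyOp] at hp
        | maxOp d e => simp [applyOp] at hp
      · obtain ⟨p', hp', h'⟩ := h2.2.1 p hp
        exact ⟨p', Or.inr hp', h'⟩
    · intro p hp
      simp only [applyOps, List.mem_append] at hp ⊢
      rcases hp with hp | hp
      · cases op with
        | output d =>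
          simp only [applyOp, Option.toList_some, List.mem_singleton] at hp
          subst hp
          exact ⟨(d, v d), Or.inl (by simp [applyOp]), rfl, (h d).2⟩
        | inc d => simp [applyOp] at hp
        | reset d => simp [applyOp] at hp
        | maxOp d e => simp [applyOp] at hp
      · obtain ⟨p', hp', h'⟩ := h2.2.2 p hp
        exact ⟨p', Or.inr hp', h'⟩

end Rel

section BoundedShift

variable {β : Type} (A : MaxAutomaton β)

lemma outsV_rel {M : ℕ} (q : A.Q) (v0 v0' : A.C → ℕ) (u : ℕ → β)
    (h : ValRel M v0 v0') (n : ℕ) :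
    ValRel M (valsV A q v0 u n) (valsV A q v0' u n) ∧
    OutRel M (outsV A q v0 u n) (outsV A q v0' u n) := by
  have key : ∀ n, ValRel M (valsV A q v0 u n) (valsV A q v0' u n) := by
    intro n
    induction n with
    | zero => exact h
    | succ n ih => exact (applyOps_rel _ _ _ ih).1
  exact ⟨key n, (applyOps_rel _ _ _ (key n)).2⟩

/-- Boundedness of a counter does not depend on the initial valuation. -/
lemma boundedV_congr {M : ℕ} (q : A.Q) (v0 v0' : A.C → ℕ) (u : ℕ → β)
    (h : ValRel M v0 v0') (c : A.C) :
    (∃ B, ∀ n, ∀ p ∈ outsV A q v0 u n, p.1 = c → p.2 ≤ B) ↔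
    (∃ B, ∀ n, ∀ p ∈ outsV A q v0' u n, p.1 = c → p.2 ≤ B) := by
  constructor
  · rintro ⟨B, hB⟩
    refine ⟨B + M, fun n p hp hc => ?_⟩
    obtain ⟨p', hp', he, hle⟩ := (outsV_rel A q v0 v0' u h n).2.2 p hp
    have := hB n p' hp' (he.trans hc)
    omega
  · rintro ⟨B, hB⟩
    refine ⟨B, fun n p hp hc => ?_⟩
    obtain ⟨p', hp', he, hle⟩ := (outsV_rel A q v0 v0' u h n).2.1 p hp
    exact le_trans hle (hB n p' hp' (he ▸ hc))

/-- Finitely many prefix outputs are bounded. -/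
lemma prefix_outs_bounded (q : A.Q) (u : ℕ → β) (N : ℕ) :
    ∃ B, ∀ n < N, ∀ p ∈ A.outsFrom q u n, p.2 ≤ B := by
  induction N with
  | zero => exact ⟨0, fun n hn => absurd hn (Nat.not_lt_zero n)⟩
  | succ N ih =>
    obtain ⟨B, hB⟩ := ih
    refine ⟨max B (((A.outsFrom q u N).map Prod.snd).foldr max 0), fun n hn p hp => ?_⟩
    rcases Nat.lt_succ_iff_lt_or_eq.1 hn with hn | hn
    · exact le_trans (hB n hn p hp) (le_max_left _ _)
    · subst hn
      exact le_trans (snd_le_foldr_max _ p.2 (List.mem_map_of_mem (f := Prod.snd) hp))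
        (le_max_right _ _)

/-- Key shift lemma for boundedness. -/
lemma boundedFrom_shift (q : A.Q) (u : ℕ → β) (N : ℕ) (c : A.C) :
    A.BoundedFrom q u c ↔
      A.BoundedFrom (A.runFrom q u N) (suffixFrom u N) c := by
  set q' := A.runFrom q u N
  set vN := A.valsFrom q u N
  set M := Finset.univ.sup vN with hM
  have hrel : ValRel M (fun _ => 0) vN := by
    intro c
    exact ⟨Nat.zero_le _, by simpa using Finset.le_sup (Finset.mem_univ c)⟩
  have tail : A.BoundedFrom q' (suffixFrom u N) c ↔
      (∃ B, ∀ n, ∀ p ∈ outsV A q' vN (suffixFrom u N) n, p.1 = c → p.2 ≤ B) := by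
    unfold MaxAutomaton.BoundedFrom
    simp only [outsFrom_eq_outsV]
    exact boundedV_congr A q' _ _ _ hrel c
  constructor
  · rintro ⟨B, hB⟩
    rw [tail]
    refine ⟨B, fun n p hp hc => ?_⟩
    rw [← outsFrom_add] at hp
    exact hB _ p hp hc
  · intro h
    rw [tail] at h
    obtain ⟨B, hB⟩ := h
    obtain ⟨B0, hB0⟩ := prefix_outs_bounded A q u N
    refine ⟨max B B0, fun n p hp hc => ?_⟩
    rcases Nat.lt_or_ge n N with hn | hn
    · exact le_trans (hB0 n hn p hp) (le_max_right _ _)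
    · obtain ⟨k, rfl⟩ := Nat.exists_eq_add_of_le hn
      rw [outsFrom_add] at hp
      exact le_trans (hB k p hp hc) (le_max_left _ _)

/-- Acceptance only depends on the current state and the suffix. -/
lemma acceptsFrom_shift (q : A.Q) (u : ℕ → β) (N : ℕ) :
    A.AcceptsFrom q u ↔
      A.AcceptsFrom (A.runFrom q u N) (suffixFrom u N) :=
  BC.eval_congr (fun c => boundedFrom_shift A q u N c) A.acc

end BoundedShift

section PairFalse

/-- Extend each letter with the bit `0`. -/
def pairFalse {α : Type} (u : ℕ → α) : ℕ → α × Bool := fun n => (u n, false)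

/-- The automaton recognizing `{ u | A accepts u[∅] from q }`. -/
def falseAut {α : Type} (A : MaxAutomaton (α × Bool)) (q : A.Q) :
    MaxAutomaton α where
  Q := A.Q
  C := A.C
  init := q
  δ := fun s a => A.δ s (a, false)
  acc := A.acc

lemma falseAut_runFrom {α : Type} (A : MaxAutomaton (α × Bool)) (q p : A.Q)
    (u : ℕ → α) (n : ℕ) :
    (falseAut A q).runFrom p u n = A.runFrom p (pairFalse u) n := by
  induction n with
  | zero => rfl
  | succ n ih => simp only [MaxAutomaton.runFrom, ih]; rfl

lemma falseAut_valsFrom {α : Type} (A : MaxAutomaton (α × Bool)) (q p : A.Q)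
    (u : ℕ → α) (n : ℕ) :
    (falseAut A q).valsFrom p u n = A.valsFrom p (pairFalse u) n := by
  induction n with
  | zero => rfl
  | succ n ih =>
    simp only [MaxAutomaton.valsFrom, ih, falseAut_runFrom]
    rfl

lemma falseAut_lang {α : Type} (A : MaxAutomaton (α × Bool)) (q : A.Q) :
    (falseAut A q).Lang = { u : ℕ → α | A.AcceptsFrom q (pairFalse u) } := by
  ext u
  have houts : ∀ n, (falseAut A q).outsFrom q u n = A.outsFrom q (pairFalse u) n := by
    intro n
    simp only [MaxAutomaton.outsFrom, falseAut_valsFrom, falseAut_runFrom]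
    rfl
  have : ∀ c, (falseAut A q).BoundedFrom q u c ↔ A.BoundedFrom q (pairFalse u) c := by
    intro c
    unfold MaxAutomaton.BoundedFrom
    simp only [houts]
    exact Iff.rfl
  exact BC.eval_congr this A.acc

end PairFalse

section Construction

open Classical

variable {α : Type}

def mn {Q : Type} (q : Q) : Option (Q × Bool) := some (q, false)
def pr {Q : Type} (q : Q) : Option (Q × Bool) := some (q, true)

lemma mn_ne_none {Q : Type} (q : Q) : mn q ≠ none := by simp [mn]
lemma pr_ne_none {Q : Type} (q : Q) : pr q ≠ none := by simp [pr]
lemma mn_ne_pr {Q : Type} (q r : Q) : mn q ≠ pr r := by simp [mn, pr]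
lemma mn_inj {Q : Type} {q r : Q} (h : mn q = mn r) : q = r := by
  simpa [mn] using h

noncomputable def qsL (Q : Type) [Fintype Q] : List Q := Finset.univ.toList

lemma mem_qsL {Q : Type} [Fintype Q] (q : Q) : q ∈ qsL Q := by
  simp [qsL]

noncomputable def edgesL (A : MaxAutomaton (α × Bool)) (R : A.Q → Bool) (a : α)
    (q : A.Q) : List (A.Q × Bool) :=
  ((qsL A.Q).flatMap (fun q' => [(q', false), (q', true)])).filter
    (fun e => R e.1 && decide ((A.δ e.1 (a, e.2)).1 = q))

lemma mem_edgesL (A : MaxAutomaton (α × Bool)) (R : A.Q → Bool) (a : α)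
    (q : A.Q) (e : A.Q × Bool) :
    e ∈ edgesL A R a q ↔ R e.1 = true ∧ (A.δ e.1 (a, e.2)).1 = q := by
  obtain ⟨q', b⟩ := e
  constructor
  · intro h
    have := List.mem_filter.1 h
    simpa using this.2
  · intro h
    refine List.mem_filter.2 ⟨?_, by simpa using h⟩
    refine List.mem_flatMap.2 ⟨q', mem_qsL _, ?_⟩
    cases b <;> simp

def blockOps {Q : Type} (α : Type) (q : Q) (e : Q × Bool) :
    List (GOp (Option (Q × Bool)) α) :=
  if e.2 then
    [.reset none, .maxOp none (mn e.1), .inc none, .maxOp (pr q) none]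
  else [.maxOp (pr q) (mn e.1)]

noncomputable def RnextF (A : MaxAutomaton (α × Bool)) (R : A.Q → Bool) (a : α) :
    A.Q → Bool :=
  fun q => decide (∃ q' b, R q' = true ∧ (A.δ q' (a, b)).1 = q)

lemma rnextF_iff (A : MaxAutomaton (α × Bool)) (R : A.Q → Bool) (a : α) (q : A.Q) :
    RnextF A R a q = true ↔ ∃ q' b, R q' = true ∧ (A.δ q' (a, b)).1 = q := by
  simp [RnextF]

def guardL (A : MaxAutomaton (α × Bool)) (q : A.Q) : Set (ℕ → α) :=
  { u | A.AcceptsFrom q (pairFalse u) }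

noncomputable def transOps (A : MaxAutomaton (α × Bool)) (R : A.Q → Bool) (a : α) :
    List (GOp (Option (A.Q × Bool)) α) :=
  ((qsL A.Q).flatMap
      (fun q => GOp.reset (pr q) :: (edgesL A R a q).flatMap (blockOps α q)))
  ++ ((qsL A.Q).flatMap (fun q => [GOp.reset (mn q), GOp.maxOp (mn q) (pr q)]))
  ++ ((qsL A.Q).flatMap
      (fun q => if RnextF A R a q then [GOp.goutput (guardL A q) (mn q)] else []))

/-- The guarded max-automaton recognizing `UL L`. -/
@[reducible] noncomputable def Bld (A : MaxAutomaton (α × Bool)) : GuardedMaxAutomaton α where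
  Q := A.Q → Bool
  C := Option (A.Q × Bool)
  finQ := inferInstance
  finC := inferInstance
  decC := inferInstance
  init := fun q => decide (q = A.init)
  δ := fun R a => (RnextF A R a, transOps A R a)
  acc := .nt ((qsL A.Q).foldr (fun q φ => .an (.atom (mn q)) φ) .tt)

/-! #### Symbolic execution of the transition program -/

lemma applyGOps_append {C : Type} [DecidableEq C] (s : ℕ → α)
    (l1 l2 : List (GOp C α)) (v : C → ℕ) :
    applyGOps s (l1 ++ l2) v =
      ((applyGOps s l2 (applyGOps s l1 v).1).1,
       (applyGOps s l1 v).2 ++ (applyGOps s l2 (applyGOps s l1 v).1).2) := by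
  induction l1 generalizing v with
  | nil => simp [applyGOps]
  | cons op t ih => simp [applyGOps, ih]

lemma blockOps_sem {Q : Type} [DecidableEq (Option (Q × Bool))] (s : ℕ → α)
    (q : Q) (e : Q × Bool) (v : Option (Q × Bool) → ℕ) :
    (applyGOps s (blockOps α q e) v).2 = [] ∧
    ∀ c, c ≠ none →
      (applyGOps s (blockOps α q e) v).1 c =
        if c = pr q then max (v (pr q)) (v (mn e.1) + if e.2 then 1 else 0)
        else v c := by
  obtain ⟨q', b⟩ := e
  cases b with
  | false =>
    refine ⟨by simp [blockOps, applyGOps, applyGOp], ?_⟩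
    intro c hc
    simp only [blockOps, if_neg (by simp : ¬ ((q', false).2 = true)),
      applyGOps, applyGOp, Function.update_apply]
    by_cases h : c = pr q <;> simp [h, mn, pr]
    exact if_congr Iff.rfl rfl rfl
  | true =>
    refine ⟨by simp [blockOps, applyGOps, applyGOp], ?_⟩
    intro c hc
    simp only [blockOps, if_pos (by simp : ((q', true).2 = true)),
      applyGOps, applyGOp, Function.update_apply]
    by_cases h : c = pr q
    · simp [h, mn, pr, Function.update_apply, applyGOps, applyGOp]
    · simp [h, hc, mn, pr, Function.update_apply, applyGOps, applyGOp]

lemma blocks_sem {Q : Type} [DecidableEq (Option (Q × Bool))] (s : ℕ → α)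
    (q : Q) (es : List (Q × Bool)) (v : Option (Q × Bool) → ℕ) :
    (applyGOps s (es.flatMap (blockOps α q)) v).2 = [] ∧
    (∀ c, c ≠ none → c ≠ pr q →
      (applyGOps s (es.flatMap (blockOps α q)) v).1 c = v c) ∧
    (applyGOps s (es.flatMap (blockOps α q)) v).1 (pr q) =
      es.foldl (fun m e => max m (v (mn e.1) + if e.2 then 1 else 0)) (v (pr q)) := by
  induction es generalizing v with
  | nil => simp [applyGOps]
  | cons e t ih =>
    obtain ⟨hout, hval⟩ := blockOps_sem s q e v
    rw [List.flatMap_cons, applyGOps_append]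
    set v1 := (applyGOps s (blockOps α q e) v).1 with hv1
    have hmn : ∀ r, v1 (mn r) = v (mn r) := by
      intro r
      rw [hval (mn r) (mn_ne_none r)]
      simp [mn_ne_pr]
    have hpr : v1 (pr q) = max (v (pr q)) (v (mn e.1) + if e.2 then 1 else 0) := by
      rw [hval (pr q) (pr_ne_none q)]
      simp
    have hother : ∀ c, c ≠ none → c ≠ pr q → v1 c = v c := by
      intro c h1 h2
      rw [hval c h1]
      simp [h2]
    obtain ⟨iout, ipres, ipr⟩ := ih v1
    refine ⟨by simp [hout, iout], ?_, ?_⟩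
    · intro c h1 h2
      rw [ipres c h1 h2, hother c h1 h2]
    · rw [ipr]
      simp only [hmn, hpr, List.foldl_cons]

lemma phase1s_sem {Q : Type} [DecidableEq (Option (Q × Bool))] (s : ℕ → α)
    (F : Q → List (Q × Bool)) (qlist : List Q) (v : Option (Q × Bool) → ℕ) :
    (applyGOps s (qlist.flatMap
        (fun q => GOp.reset (pr q) :: (F q).flatMap (blockOps α q))) v).2 = [] ∧
    (∀ r, (applyGOps s (qlist.flatMap
        (fun q => GOp.reset (pr q) :: (F q).flatMap (blockOps α q))) v).1 (mn r)
        = v (mn r)) ∧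
    (∀ r, r ∉ qlist → (applyGOps s (qlist.flatMap
        (fun q => GOp.reset (pr q) :: (F q).flatMap (blockOps α q))) v).1 (pr r)
        = v (pr r)) ∧
    (∀ r ∈ qlist, (applyGOps s (qlist.flatMap
        (fun q => GOp.reset (pr q) :: (F q).flatMap (blockOps α q))) v).1 (pr r)
        = (F r).foldl (fun m e => max m (v (mn e.1) + if e.2 then 1 else 0)) 0) := by
  induction qlist generalizing v with
  | nil => simp [applyGOps]
  | cons q t ih =>
    rw [List.flatMap_cons, applyGOps_append]
    have hcons : applyGOps s (GOp.reset (pr q) :: (F q).flatMap (blockOps α q)) v =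
        ((applyGOps s ((F q).flatMap (blockOps α q)) (Function.update v (pr q) 0)).1,
         (applyGOps s ((F q).flatMap (blockOps α q)) (Function.update v (pr q) 0)).2) := by
      simp [applyGOps, applyGOp]
    obtain ⟨bout, bpres, bpr⟩ := blocks_sem s q (F q) (Function.update v (pr q) 0)
    set v0 := Function.update v (pr q) 0 with hv0
    set v1 := (applyGOps s ((F q).flatMap (blockOps α q)) v0).1 with hv1x
    have hmn1 : ∀ r, v1 (mn r) = v (mn r) := by
      intro r
      rw [bpres (mn r) (mn_ne_none r) (mn_ne_pr r q)]
      simp [hv0, Function.update_apply, mn, pr]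
    have hpr1 : ∀ r, r ≠ q → v1 (pr r) = v (pr r) := by
      intro r hr
      rw [bpres (pr r) (pr_ne_none r) (by simp [pr, hr])]
      simp [hv0, Function.update_apply, pr, hr]
    have hprq : v1 (pr q) =
        (F q).foldl (fun m e => max m (v (mn e.1) + if e.2 then 1 else 0)) 0 := by
      rw [bpr]
      have h0 : Function.update v (pr q) 0 (pr q) = 0 := Function.update_self _ _ _
      have hm : ∀ r : Q, Function.update v (pr q) 0 (mn r) = v (mn r) := by
        intro r; exact Function.update_of_ne (mn_ne_pr r q) _ _
      simp only [hv0, hm, h0]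
    obtain ⟨iout, imn, ipres, ival⟩ := ih v1
    refine ⟨?_, ?_, ?_, ?_⟩
    · rw [hcons]; simp only [bout, iout]; simp
    · intro r
      rw [hcons]
      simp only
      rw [imn r, hmn1 r]
    · intro r hr
      rw [hcons]
      simp only
      rw [ipres r (fun h => hr (List.mem_cons_of_mem _ h)),
        hpr1 r (fun h => hr (h ▸ List.mem_cons_self))]
    · intro r hr
      rw [hcons]
      simp only
      rcases List.mem_cons.1 hr with h | h
      · subst h
        by_cases hrt : r ∈ t
        · rw [ival r hrt]
          simp only [hmn1]
        · rw [ipres r hrt, hprq]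
      · rw [ival r h]
        simp only [hmn1]

lemma phase2s_sem {Q : Type} [DecidableEq (Option (Q × Bool))] (s : ℕ → α)
    (qlist : List Q) (v : Option (Q × Bool) → ℕ) :
    (applyGOps s (qlist.flatMap
        (fun q => ([GOp.reset (mn q), GOp.maxOp (mn q) (pr q)] : List (GOp (Option (Q × Bool)) α)))) v).2 = [] ∧
    (∀ r ∈ qlist, (applyGOps s (qlist.flatMap
        (fun q => [GOp.reset (mn q), GOp.maxOp (mn q) (pr q)])) v).1 (mn r) = v (pr r)) ∧
    (∀ r, r ∉ qlist → (applyGOps s (qlist.flatMap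
        (fun q => [GOp.reset (mn q), GOp.maxOp (mn q) (pr q)])) v).1 (mn r) = v (mn r)) ∧
    (∀ r, (applyGOps s (qlist.flatMap
        (fun q => [GOp.reset (mn q), GOp.maxOp (mn q) (pr q)])) v).1 (pr r) = v (pr r)) := by
  induction qlist generalizing v with
  | nil => simp [applyGOps]
  | cons q t ih =>
    rw [List.flatMap_cons, applyGOps_append]
    set v1 := (applyGOps s ([GOp.reset (mn q), GOp.maxOp (mn q) (pr q)] :
      List (GOp (Option (Q × Bool)) α)) v).1 with hv1
    have h1out : (applyGOps s ([GOp.reset (mn q), GOp.maxOp (mn q) (pr q)] :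
        List (GOp (Option (Q × Bool)) α)) v).2 = [] := by
      simp [applyGOps, applyGOp]
    have hv1mn : v1 (mn q) = v (pr q) := by
      simp [hv1, applyGOps, applyGOp, Function.update_apply, mn, pr]
    have hv1mn' : ∀ r, r ≠ q → v1 (mn r) = v (mn r) := by
      intro r hr
      simp [hv1, applyGOps, applyGOp, Function.update_apply, mn, pr, hr]
    have hv1pr : ∀ r, v1 (pr r) = v (pr r) := by
      intro r
      simp [hv1, applyGOps, applyGOp, Function.update_apply, mn, pr]
    obtain ⟨iout, imem, ipres, ipr⟩ := ih v1
    refine ⟨?_, ?_, ?_, ?_⟩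
    · simp only [h1out, iout]; simp
    · intro r hr
      simp only
      rcases List.mem_cons.1 hr with h | h
      · subst h
        by_cases hrt : r ∈ t
        · rw [imem r hrt, hv1pr]
        · rw [ipres r hrt, hv1mn]
      · rw [imem r h, hv1pr]
    · intro r hr
      simp only
      rw [ipres r (fun h => hr (List.mem_cons_of_mem _ h)),
        hv1mn' r (fun h => hr (h ▸ List.mem_cons_self))]
    · intro r
      simp only
      rw [ipr r, hv1pr r]

lemma phase3s_sem {Q : Type} [DecidableEq (Option (Q × Bool))] (s : ℕ → α)
    (P : Q → Bool) (Gf : Q → Set (ℕ → α)) (qlist : List Q)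
    (v : Option (Q × Bool) → ℕ) :
    (applyGOps s (qlist.flatMap
        (fun q => if P q then [GOp.goutput (Gf q) (mn q)] else [])) v).1 = v ∧
    (∀ p, p ∈ (applyGOps s (qlist.flatMap
        (fun q => if P q then [GOp.goutput (Gf q) (mn q)] else [])) v).2 ↔
      ∃ q ∈ qlist, P q = true ∧ s ∈ Gf q ∧ p = (mn q, v (mn q))) := by
  induction qlist generalizing v with
  | nil => simp [applyGOps]
  | cons q t ih =>
    rw [List.flatMap_cons, applyGOps_append]
    have hval : (applyGOps s (if P q then [GOp.goutput (Gf q) (mn q)] else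
        ([] : List (GOp (Option (Q × Bool)) α))) v).1 = v := by
      by_cases h : P q <;> simp [h, applyGOps, applyGOp]
    have hout : ∀ p, p ∈ (applyGOps s (if P q then [GOp.goutput (Gf q) (mn q)] else
        ([] : List (GOp (Option (Q × Bool)) α))) v).2 ↔
        (P q = true ∧ s ∈ Gf q ∧ p = (mn q, v (mn q))) := by
      intro p
      by_cases h : P q
      · by_cases hs : s ∈ Gf q <;> simp [h, hs, applyGOps, applyGOp]
      · simp [h, applyGOps]
    rw [hval]
    obtain ⟨ival, iout⟩ := ih v
    constructor
    · exact ival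
    · intro p
      simp only [List.mem_append, hout, iout, List.mem_cons]
      constructor
      · rintro (⟨h1, h2, h3⟩ | ⟨r, hr, h⟩)
        · exact ⟨q, Or.inl rfl, h1, h2, h3⟩
        · exact ⟨r, Or.inr hr, h⟩
      · rintro ⟨r, hr | hr, h⟩
        · subst hr; exact Or.inl h
        · exact Or.inr ⟨r, hr, h⟩

end Construction

section BldSem

open Classical

variable {α : Type}

instance subsingleton_decEq (C : Type) : Subsingleton (DecidableEq C) :=
  ⟨fun i1 i2 => funext fun a => funext fun b => Subsingleton.elim (i1 a b) (i2 a b)⟩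

lemma applyGOps_irrel {C : Type} (i1 i2 : DecidableEq C) (s : ℕ → α)
    (l : List (GOp C α)) (v : C → ℕ) :
    @applyGOps C α i1 s l v = @applyGOps C α i2 s l v := by
  rw [Subsingleton.elim i1 i2]

variable (A : MaxAutomaton (α × Bool))

lemma Bld_run_succ (w : ℕ → α) (n : ℕ) :
    (Bld A).run w (n + 1) = RnextF A ((Bld A).run w n) (w n) := rfl

lemma Bld_run_zero (w : ℕ → α) (q : A.Q) :
    (Bld A).run w 0 q = decide (q = A.init) := rfl

lemma Bld_vals_zero (w : ℕ → α) (c : Option (A.Q × Bool)) :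
    (Bld A).vals w 0 c = 0 := rfl

lemma Bld_step (w : ℕ → α) (n : ℕ) :
    (∀ q, (Bld A).vals w (n + 1) (mn q) =
      (edgesL A ((Bld A).run w n) (w n) q).foldl
        (fun m e => max m ((Bld A).vals w n (mn e.1) + if e.2 then 1 else 0)) 0) ∧
    (∀ p, p ∈ (Bld A).outs w n ↔ ∃ q, (Bld A).run w (n + 1) q = true ∧
      suffixFrom w (n + 1) ∈ guardL A q ∧
      p = (mn q, (Bld A).vals w (n + 1) (mn q))) := by
  set s := suffixFrom w (n + 1) with hs
  set R := (Bld A).run w n with hR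
  set a := w n with ha
  set V := (Bld A).vals w n with hV
  have hvals : (Bld A).vals w (n + 1) =
      (applyGOps s (transOps A R a) V).1 := by
    rw [GuardedMaxAutomaton.vals]
  have houts : (Bld A).outs w n =
      (applyGOps s (transOps A R a) V).2 := by
    unfold GuardedMaxAutomaton.outs
    exact congrArg Prod.snd (applyGOps_irrel _ _ _ _ _)
  rw [show transOps A R a =
    (((qsL A.Q).flatMap
        (fun q => GOp.reset (pr q) :: (edgesL A R a q).flatMap (blockOps α q)))
      ++ ((qsL A.Q).flatMap (fun q =>
        ([GOp.reset (mn q), GOp.maxOp (mn q) (pr q)] : List (GOp (Option (A.Q × Bool)) α)))))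
      ++ ((qsL A.Q).flatMap
        (fun q => if RnextF A R a q then [GOp.goutput (guardL A q) (mn q)] else []))
    from rfl, applyGOps_append, applyGOps_append] at hvals houts
  obtain ⟨p1out, p1mn, -, p1pr⟩ := phase1s_sem s (edgesL A R a) (qsL A.Q) V
  set v1 := (applyGOps s ((qsL A.Q).flatMap
      (fun q => GOp.reset (pr q) :: (edgesL A R a q).flatMap (blockOps α q))) V).1 with hv1
  obtain ⟨p2out, p2mem, -, -⟩ := phase2s_sem (α := α) s (qsL A.Q) v1
  set v2 := (applyGOps s ((qsL A.Q).flatMap (fun q =>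
      ([GOp.reset (mn q), GOp.maxOp (mn q) (pr q)] : List (GOp (Option (A.Q × Bool)) α)))) v1).1
    with hv2
  obtain ⟨p3val, p3mem⟩ := phase3s_sem s (RnextF A R a) (guardL A) (qsL A.Q) v2
  rw [p1out, p2out, p3val] at hvals houts
  simp only [List.nil_append] at houts
  constructor
  · intro q
    rw [hvals, p2mem q (mem_qsL q), p1pr q (mem_qsL q)]
  · intro p
    rw [houts]
    rw [p3mem p]
    constructor
    · rintro ⟨q, -, hP, hg, hp⟩
      refine ⟨q, ?_, hg, ?_⟩
      · rw [Bld_run_succ]; exact hP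
      · rw [hvals]; exact hp
    · rintro ⟨q, hP, hg, hp⟩
      refine ⟨q, mem_qsL q, ?_, hg, ?_⟩
      · rw [Bld_run_succ] at hP; exact hP
      · rw [hvals] at hp; exact hp

lemma runFrom_congr {β : Type} (A' : MaxAutomaton β) (q : A'.Q) {u u' : ℕ → β} :
    ∀ n, (∀ k, k < n → u k = u' k) → A'.runFrom q u n = A'.runFrom q u' n := by
  intro n
  induction n with
  | zero => intro _; rfl
  | succ n ih =>
    intro h
    show (A'.δ (A'.runFrom q u n) (u n)).1 = (A'.δ (A'.runFrom q u' n) (u' n)).1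
    rw [ih (fun k hk => h k (Nat.lt_succ_of_lt hk)), h n (Nat.lt_succ_self n)]

lemma withSet_congr {w : ℕ → α} {X X' : Finset ℕ} {n : ℕ}
    (h : ∀ k, k < n → (k ∈ X ↔ k ∈ X')) :
    ∀ k, k < n → withSet w X k = withSet w X' k := by
  intro k hk
  simp [withSet, decide_eq_decide.2 (h k hk)]

lemma suffix_withSet {w : ℕ → α} {X : Finset ℕ} {N : ℕ} (h : ∀ x ∈ X, x < N) :
    suffixFrom (withSet w X) N = pairFalse (suffixFrom w N) := by
  funext k
  have hx : N + k ∉ X := fun hx => by have := h _ hx; omega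
  simp [suffixFrom, withSet, pairFalse, hx]

lemma Bld_invariant (w : ℕ → α) : ∀ n q,
    ((Bld A).run w n q = true → ∃ X : Finset ℕ, (∀ x ∈ X, x < n) ∧
      X.card = (Bld A).vals w n (mn q) ∧
      A.runFrom A.init (withSet w X) n = q) ∧
    (∀ X : Finset ℕ, (∀ x ∈ X, x < n) → A.runFrom A.init (withSet w X) n = q →
      (Bld A).run w n q = true ∧ X.card ≤ (Bld A).vals w n (mn q)) := by
  intro n
  induction n with
  | zero =>
    intro q
    constructor
    · intro hq
      refine ⟨∅, by simp, by simp [Bld_vals_zero], ?_⟩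
      exact (of_decide_eq_true hq).symm
    · intro X hX hrun
      have hXe : X = ∅ :=
        Finset.eq_empty_of_forall_notMem (fun x hx => Nat.not_lt_zero x (hX x hx))
      have hq : q = A.init := by
        have h0 : A.runFrom A.init (withSet w X) 0 = A.init := rfl
        rw [h0] at hrun
        exact hrun.symm
      exact ⟨decide_eq_true hq, by simp [hXe, Bld_vals_zero]⟩
  | succ n ih =>
    intro q
    have hv := (Bld_step A w n).1 q
    constructor
    · intro hq
      rw [Bld_run_succ] at hq
      obtain ⟨q₀, b₀, hR₀, hδ₀⟩ := (rnextF_iff A ((Bld A).run w n) (w n) q).1 hq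
      have he₀ : (q₀, b₀) ∈ edgesL A ((Bld A).run w n) (w n) q :=
        (mem_edgesL A ((Bld A).run w n) (w n) q (q₀, b₀)).2 ⟨hR₀, hδ₀⟩
      obtain ⟨e, he, hce⟩ : ∃ e ∈ edgesL A ((Bld A).run w n) (w n) q,
          ((Bld A).vals w n (mn e.1) + if e.2 then 1 else 0) =
            (Bld A).vals w (n + 1) (mn q) := by
        rcases foldl_max_achieved
            (fun e => (Bld A).vals w n (mn e.1) + if e.2 then 1 else 0)
            (edgesL A ((Bld A).run w n) (w n) q) 0 with h0 | ⟨e, he, hee⟩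
        · refine ⟨(q₀, b₀), he₀, ?_⟩
          have h1 := le_foldl_max_mem
            (fun e => (Bld A).vals w n (mn e.1) + if e.2 then 1 else 0)
            (edgesL A ((Bld A).run w n) (w n) q) 0 (q₀, b₀) he₀
          rw [h0] at h1
          rw [hv, h0]
          dsimp only at h1 ⊢
          omega
        · exact ⟨e, he, by rw [hv, hee]⟩
      obtain ⟨q', b⟩ := e
      rw [mem_edgesL] at he
      dsimp only at hce he
      obtain ⟨X', hX'lt, hX'card, hX'run⟩ := (ih q').1 he.1
      have hnX' : n ∉ X' := fun h => absurd (hX'lt n h) (lt_irrefl n)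
      cases b with
      | false =>
        refine ⟨X', fun x hx => Nat.lt_succ_of_lt (hX'lt x hx), ?_, ?_⟩
        · rw [← hce]
          simpa using hX'card
        · show (A.δ (A.runFrom A.init (withSet w X') n) (withSet w X' n)).1 = q
          rw [hX'run]
          have hws : withSet w X' n = (w n, false) := by simp [withSet, hnX']
          rw [hws]
          exact he.2
      | true =>
        refine ⟨insert n X', ?_, ?_, ?_⟩
        · intro x hx
          rcases Finset.mem_insert.1 hx with h | h
          · omega
          · exact Nat.lt_succ_of_lt (hX'lt x h)
        · rw [Finset.card_insert_of_notMem hnX', ← hce]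
          simpa using hX'card
        · show (A.δ (A.runFrom A.init (withSet w (insert n X')) n)
            (withSet w (insert n X') n)).1 = q
          have hcongr : ∀ k, k < n → withSet w (insert n X') k = withSet w X' k := by
            apply withSet_congr
            intro k hk
            simp [Finset.mem_insert, Nat.ne_of_lt hk]
          rw [runFrom_congr A A.init n hcongr, hX'run]
          have hws : withSet w (insert n X') n = (w n, true) := by simp [withSet]
          rw [hws]
          exact he.2
    · intro X hXlt hXrun
      have hX'lt : ∀ x ∈ X.erase n, x < n := by
        intro x hx
        have h1 := Finset.mem_erase.1 hx
        have h2 := hXlt x h1.2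
        omega
      have hcongr : ∀ k, k < n → withSet w X k = withSet w (X.erase n) k := by
        apply withSet_congr
        intro k hk
        simp [Finset.mem_erase, Nat.ne_of_lt hk]
      have hrun_n : A.runFrom A.init (withSet w X) n =
          A.runFrom A.init (withSet w (X.erase n)) n :=
        runFrom_congr A A.init n hcongr
      obtain ⟨hRq', hcard'⟩ :=
        (ih (A.runFrom A.init (withSet w (X.erase n)) n)).2 (X.erase n) hX'lt rfl
      have hδq : (A.δ (A.runFrom A.init (withSet w (X.erase n)) n)
          (w n, decide (n ∈ X))).1 = q := by
        have hstep : A.runFrom A.init (withSet w X) (n + 1) =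
            (A.δ (A.runFrom A.init (withSet w X) n) (withSet w X n)).1 := rfl
        rw [hstep, hrun_n] at hXrun
        exact hXrun
      have he : (A.runFrom A.init (withSet w (X.erase n)) n, decide (n ∈ X)) ∈
          edgesL A ((Bld A).run w n) (w n) q :=
        (mem_edgesL A ((Bld A).run w n) (w n) q _).2 ⟨hRq', hδq⟩
      constructor
      · rw [Bld_run_succ]
        exact (rnextF_iff A ((Bld A).run w n) (w n) q).2
          ⟨A.runFrom A.init (withSet w (X.erase n)) n, decide (n ∈ X), hRq', hδq⟩
      · have hle := le_foldl_max_mem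
          (fun e => (Bld A).vals w n (mn e.1) + if e.2 then 1 else 0)
          (edgesL A ((Bld A).run w n) (w n) q) 0 _ he
        rw [← hv] at hle
        dsimp only at hle
        by_cases hn : n ∈ X
        · have h1 := Finset.card_erase_of_mem hn
          have h2 : 1 ≤ X.card := Finset.card_pos.2 ⟨n, hn⟩
          simp [hn] at hle
          omega
        · have h1 : X.erase n = X := Finset.erase_eq_of_notMem hn
          simp [hn] at hle
          rw [h1] at hcard'
          omega

lemma foldr_an_eval {Q : Type} (P : Option (Q × Bool) → Prop) (qlist : List Q) :
    BC.eval P (qlist.foldr (fun q φ => BC.an (.atom (mn q)) φ) .tt) ↔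
      ∀ q ∈ qlist, P (mn q) := by
  induction qlist with
  | nil => simp [BC.eval]
  | cons q t ih => simp [BC.eval, ih]

lemma Bld_accepts_iff (w : ℕ → α) :
    (Bld A).Accepts w ↔ ¬ ∀ q : A.Q, (Bld A).Bounded w (mn q) := by
  show ¬ BC.eval ((Bld A).Bounded w)
      ((qsL A.Q).foldr (fun q φ => BC.an (.atom (mn q)) φ) .tt) ↔ _
  have hiff := foldr_an_eval ((Bld A).Bounded w) (qsL A.Q)
  constructor
  · intro hacc hall
    exact hacc (hiff.2 fun q _ => hall q)
  · intro h hev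
    exact h fun q => hiff.1 hev q (mem_qsL q)

end BldSem

section Main

open Classical

variable {α : Type}

lemma Bld_wf (A : MaxAutomaton (α × Bool)) : (Bld A).WF := by
  intro R a op hop
  have hop' : op ∈ transOps A R a := hop
  simp only [transOps, List.mem_append, List.mem_flatMap] at hop'
  rcases hop' with (⟨q, -, h⟩ | ⟨q, -, h⟩) | ⟨q, -, h⟩
  · rcases List.mem_cons.1 h with h | h
    · subst h; trivial
    · rcases List.mem_flatMap.1 h with ⟨e, -, h⟩
      obtain ⟨r, b⟩ := e
      cases b with
      | false =>
        simp [blockOps] at h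
        subst h; trivial
      | true =>
        simp [blockOps] at h
        rcases h with rfl | rfl | rfl | rfl <;> trivial
  · simp at h
    rcases h with h | h <;> (subst h; trivial)
  · by_cases hr : RnextF A R a q = true
    · rw [if_pos hr] at h
      simp at h
      subst h
      exact ⟨falseAut A q, falseAut_lang A q⟩
    · rw [if_neg hr] at h
      simp at h

end Main

/-- If `L` is recognized by a deterministic max-automaton,
then `UL` is recognized by a deterministic guarded max-automaton. -/
theorem UL_guardedMaxAutomaton {α : Type} [Fintype α]
    (L : Set (ℕ → α × Bool))
    (h : ∃ A : MaxAutomaton (α × Bool), A.Lang = L) :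
    ∃ B : GuardedMaxAutomaton α, B.WF ∧ B.Lang = UL L := by
  classical
  obtain ⟨A, hA⟩ := h
  refine ⟨Bld A, Bld_wf A, ?_⟩
  ext w
  show (Bld A).Accepts w ↔ w ∈ UL L
  rw [Bld_accepts_iff]
  constructor
  · intro hnb
    obtain ⟨q, hq⟩ := not_forall.1 hnb
    intro n
    simp only [GuardedMaxAutomaton.Bounded] at hq
    push_neg at hq
    obtain ⟨m, p, hp, hp1, hp2⟩ := hq n
    rw [(Bld_step A w m).2 p] at hp
    obtain ⟨q', hRq', hg, hpe⟩ := hp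
    have hqq : q' = q := by
      rw [hpe] at hp1
      exact mn_inj hp1
    rw [hpe] at hp2
    dsimp only at hp2
    obtain ⟨X, hXlt, hXcard, hXrun⟩ := (Bld_invariant A w (m + 1) q').1 hRq'
    refine ⟨X, by omega, ?_⟩
    rw [← hA]
    show A.Accepts (withSet w X)
    have hsh := acceptsFrom_shift A A.init (withSet w X) (m + 1)
    rw [hXrun, suffix_withSet hXlt] at hsh
    exact hsh.2 hg
  · intro hUL hball
    choose f hf using hball
    obtain ⟨X, hXcard, hXL⟩ := hUL (Finset.univ.sup f + 1)
    have hXlt : ∀ x ∈ X, x < X.sup id + 1 := fun x hx =>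
      Nat.lt_succ_of_le (Finset.le_sup (f := id) hx)
    have hacc : A.Accepts (withSet w X) := by rw [← hA] at hXL; exact hXL
    obtain ⟨hRq, hVq⟩ :=
      (Bld_invariant A w (X.sup id + 1)
        (A.runFrom A.init (withSet w X) (X.sup id + 1))).2 X hXlt rfl
    have hg : suffixFrom w (X.sup id + 1) ∈
        guardL A (A.runFrom A.init (withSet w X) (X.sup id + 1)) := by
      have hsh := acceptsFrom_shift A A.init (withSet w X) (X.sup id + 1)
      rw [suffix_withSet hXlt] at hsh
      exact hsh.1 hacc
    have hout : (mn (A.runFrom A.init (withSet w X) (X.sup id + 1)),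
        (Bld A).vals w (X.sup id + 1)
          (mn (A.runFrom A.init (withSet w X) (X.sup id + 1)))) ∈
        (Bld A).outs w (X.sup id) := by
      apply ((Bld_step A w (X.sup id)).2 _).2
      exact ⟨A.runFrom A.init (withSet w X) (X.sup id + 1), hRq, hg, rfl⟩
    have hbd := hf (A.runFrom A.init (withSet w X) (X.sup id + 1)) (X.sup id) _
      hout rfl
    dsimp only at hbd
    have hfq : f (A.runFrom A.init (withSet w X) (X.sup id + 1)) ≤
        Finset.univ.sup f := Finset.le_sup (Finset.mem_univ _)
    omega

end MaxReg
end

section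
/- The language L_sep is recognized by a nondeterministic max-automaton. -/
namespace MaxReg

/-! ### Construction for Statement 17 -/

abbrev selOps : List (CounterOp Bool) :=
  [.output false, .reset false, .inc true, .output true]

abbrev skipOps : List (CounterOp Bool) := [.reset false]

abbrev aOps : List (CounterOp Bool) := [.inc false]

def Nsep : NMaxAutomaton Bool where
  Q := Unit
  C := Bool
  init := ()
  δ := fun _ b =>
    if b then {((), skipOps), ((), selOps)} else {((), aOps)}
  acc := .an (.atom false) (.nt (.atom true))

def opsOf (w sel : ℕ → Bool) (n : ℕ) : List (CounterOp Bool) :=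
  if w n then (if sel n then selOps else skipOps) else aOps

lemma opsOf_mem (w sel : ℕ → Bool) (n : ℕ) :
    (((), opsOf w sel n) : Unit × List (CounterOp Bool)) ∈ Nsep.δ () (w n) := by
  show _ ∈ (if w n then _ else _ : Set _)
  unfold opsOf
  cases hw : w n <;> cases hs : sel n <;> simp

lemma vc_succ (w sel : ℕ → Bool) (n : ℕ) :
    nvals (opsOf w sel) (n+1) false =
      if w n = true then 0 else nvals (opsOf w sel) n false + 1 := by
  cases hw : w n <;> cases hs : sel n <;>
    simp [nvals, opsOf, hw, hs, applyOps, applyOp, Function.update]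

lemma ve_succ (w sel : ℕ → Bool) (n : ℕ) :
    nvals (opsOf w sel) (n+1) true =
      if w n = true ∧ sel n = true then nvals (opsOf w sel) n true + 1
      else nvals (opsOf w sel) n true := by
  cases hw : w n <;> cases hs : sel n <;>
    simp [nvals, opsOf, hw, hs, applyOps, applyOp, Function.update]

lemma nouts_eq (w sel : ℕ → Bool) (n : ℕ) :
    nouts (opsOf w sel) n =
      if w n = true ∧ sel n = true then
        [(false, nvals (opsOf w sel) n false),
         (true, nvals (opsOf w sel) n true + 1)]
      else [] := by
  cases hw : w n <;> cases hs : sel n <;>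
    simp [nouts, opsOf, hw, hs, applyOps, applyOp, Function.update]
lemma bpos_succ (ns : ℕ → ℕ) (k : ℕ) :
    bpos ns (k+1) = bpos ns k + ns (k+1) + 1 := by
  simp [bpos, Finset.sum_range_succ]; ring

lemma bpos_zero (ns : ℕ → ℕ) : bpos ns 0 = ns 0 := by simp [bpos]

lemma bpos_strictMono (ns : ℕ → ℕ) : StrictMono (bpos ns) := by
  apply strictMono_nat_of_lt_succ
  intro k; rw [bpos_succ]; omega

/-- If the counter `c` is `0` at `s` and the next `len` letters are `a`,
then `c` has value `len` at `s+len`. -/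
lemma vc_seg (w sel : ℕ → Bool) (s : ℕ) :
    ∀ len : ℕ, nvals (opsOf w sel) s false = 0 →
      (∀ j, j < len → w (s + j) = false) →
      nvals (opsOf w sel) (s + len) false = len := by
  intro len
  induction len with
  | zero => intro h _; simpa using h
  | succ m ih =>
      intro h0 hfalse
      have : s + (m + 1) = (s + m) + 1 := by omega
      rw [this, vc_succ, hfalse m (by omega), ih h0 (fun j hj => hfalse j (by omega))]
      simp

lemma vc_bpos (w sel : ℕ → Bool) (ns : ℕ → ℕ)
    (hw : ∀ m, w m = true ↔ ∃ k, bpos ns k = m) (k : ℕ) :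
    nvals (opsOf w sel) (bpos ns k) false = ns k := by
  have hmono := bpos_strictMono ns
  have hfalse : ∀ m, (∀ k, bpos ns k ≠ m) → w m = false := by
    intro m hm
    cases h : w m with
    | false => rfl
    | true => obtain ⟨j, hj⟩ := (hw m).1 h; exact absurd hj (hm j)
  cases k with
  | zero =>
      rw [bpos_zero]
      have := vc_seg w sel 0 (ns 0) (by rfl)
        (fun j hj => hfalse (0+j) (fun i hi => by
          have : bpos ns 0 ≤ bpos ns i := hmono.monotone (Nat.zero_le i)
          rw [bpos_zero] at this; omega))
      simpa using this
  | succ k =>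
      have hstep : bpos ns (k+1) = (bpos ns k + 1) + ns (k+1) := by
        rw [bpos_succ]; omega
      rw [hstep]
      apply vc_seg
      · rw [vc_succ, if_pos ((hw (bpos ns k)).2 ⟨k, rfl⟩)]
      · intro j hj
        apply hfalse
        intro i hi
        have h1 : bpos ns k < bpos ns i := by omega
        have h2 : bpos ns i < bpos ns (k+1) := by rw [bpos_succ]; omega
        have := hmono.lt_iff_lt.1 h1
        have := hmono.lt_iff_lt.1 h2
        omega

lemma ve_mono (w sel : ℕ → Bool) : Monotone (fun n => nvals (opsOf w sel) n true) := by
  apply monotone_nat_of_le_succ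
  intro n
  rw [ve_succ]
  split <;> omega

lemma ve_le (w sel : ℕ → Bool) (n : ℕ) : nvals (opsOf w sel) n true ≤ n := by
  induction n with
  | zero => simp [nvals]
  | succ m ih => rw [ve_succ]; split <;> omega

lemma ve_unbounded (w sel : ℕ → Bool)
    (hS : {n | w n = true ∧ sel n = true}.Infinite) (B : ℕ) :
    ∃ n, (w n = true ∧ sel n = true) ∧ B ≤ nvals (opsOf w sel) n true := by
  induction B with
  | zero =>
      obtain ⟨n, hn⟩ := hS.nonempty
      exact ⟨n, hn, Nat.zero_le _⟩
  | succ B ih =>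
      obtain ⟨n, hn, hB⟩ := ih
      obtain ⟨m, hm, hnm⟩ := hS.exists_gt n
      refine ⟨m, hm, ?_⟩
      have h1 : nvals (opsOf w sel) (n+1) true = nvals (opsOf w sel) n true + 1 := by
        rw [ve_succ, if_pos hn]
      have h2 := ve_mono w sel (show n + 1 ≤ m by omega)
      simp only at h2
      omega
lemma pigeonhole {J : Set ℕ} (ns : ℕ → ℕ) (B : ℕ) (hJ : J.Infinite)
    (hb : ∀ k ∈ J, ns k ≤ B) : ∃ v, {i | ns i = v}.Infinite := by
  by_contra h
  push_neg at h
  apply hJ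
  have hsub : J ⊆ ⋃ v ∈ Finset.range (B+1), {i | ns i = v} := by
    intro k hk
    simp only [Set.mem_iUnion, Finset.mem_range]
    exact ⟨ns k, by have := hb k hk; omega, rfl⟩
  exact Set.Finite.subset (Set.Finite.biUnion (Finset.range (B+1)).finite_toSet
    (fun v _ => h v)) hsub

open Classical in
/-- Block lengths extracted from a word with infinitely many `true`s. -/
noncomputable def nsOf (w : ℕ → Bool) : ℕ → ℕ
  | 0 => Nat.nth (fun n => w n = true) 0
  | k + 1 => Nat.nth (fun n => w n = true) (k+1) - Nat.nth (fun n => w n = true) k - 1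

lemma bpos_nsOf (w : ℕ → Bool) (hinf : {n | w n = true}.Infinite) (k : ℕ) :
    bpos (nsOf w) k = Nat.nth (fun n => w n = true) k := by
  induction k with
  | zero => rw [bpos_zero]; rfl
  | succ k ih =>
      have hlt : Nat.nth (fun n => w n = true) k < Nat.nth (fun n => w n = true) (k+1) :=
        Nat.nth_strictMono hinf (Nat.lt_succ_self k)
      rw [bpos_succ, ih]
      show _ + (Nat.nth _ (k+1) - Nat.nth _ k - 1) + 1 = _
      omega

lemma hw_nsOf (w : ℕ → Bool) (hinf : {n | w n = true}.Infinite) (m : ℕ) :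
    w m = true ↔ ∃ k, bpos (nsOf w) k = m := by
  constructor
  · intro hm
    classical
    exact ⟨Nat.count (fun n => w n = true) m, by
      rw [bpos_nsOf w hinf]; exact Nat.nth_count hm⟩
  · rintro ⟨k, rfl⟩
    rw [bpos_nsOf w hinf]
    exact Nat.nth_mem_of_infinite hinf k
/-- The language `L_sep` is recognized by a nondeterministic
max-automaton. -/
theorem Lsep_nondeterministic :
    ∃ N : NMaxAutomaton Bool, N.Lang = Lsep := by
  classical
  refine ⟨Nsep, ?_⟩
  ext w
  constructor
  · -- Accepts → Lsep
    rintro ⟨q, ops, hq0, hmem, hacc⟩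
    obtain ⟨⟨B, hB⟩, he⟩ :
        (∃ B, ∀ n, ∀ p ∈ nouts ops n, p.1 = false → p.2 ≤ B) ∧
        ¬ (∃ B, ∀ n, ∀ p ∈ nouts ops n, p.1 = true → p.2 ≤ B) := hacc
    set sel : ℕ → Bool := fun n => decide (ops n = selOps) with hsel
    have hops : ops = opsOf w sel := by
      funext n
      have h := hmem n
      unfold opsOf
      cases hw : w n
      · rw [hw] at h
        have : ops n = aOps := by
          have h2 : q (n+1) = () ∧ ops n = aOps :=
            Prod.mk.inj (show (q (n+1), ops n) = ((), aOps) from h)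
          exact h2.2
        simpa using this
      · rw [hw] at h
        have : ops n = skipOps ∨ ops n = selOps := by
          have h2 : q (n+1) = () ∧ ops n = skipOps ∨ q (n+1) = () ∧ ops n = selOps :=
            (show (q (n+1), ops n) = ((), skipOps) ∨ (q (n+1), ops n) = ((), selOps)
              from h).imp Prod.mk.inj Prod.mk.inj
          rcases h2 with h2 | h2
          · exact Or.inl h2.2
          · exact Or.inr h2.2
        rcases this with h' | h'
        · have hs : sel n = false := by
            rw [hsel]; simp only [decide_eq_false_iff_not]
            rw [h']; simp [skipOps, selOps]
            exact fun hc => absurd (congrArg List.length hc) (by simp)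
          rw [hs]; simpa using h'
        · have hs : sel n = true := by rw [hsel]; simp [h']; rfl
          rw [hs]; simpa using h'
    rw [hops] at hB he
    -- infinitely many selected positions
    have hS : {n | w n = true ∧ sel n = true}.Infinite := by
      by_contra hfin
      rw [Set.not_infinite] at hfin
      apply he
      obtain ⟨N, hN⟩ := hfin.bddAbove
      refine ⟨N + 1, fun n (p : Bool × ℕ) hp hp1 => ?_⟩
      replace hp : @Membership.mem (Bool × ℕ) (List (Bool × ℕ)) _ (nouts (opsOf w sel) n) p := hp
      replace hp1 : p.1 = true := hp1
      rw [nouts_eq] at hp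
      by_cases hn : w n = true ∧ sel n = true
      · rw [if_pos hn] at hp
        have hnN : n ≤ N := hN hn
        have hv := ve_le w sel n
        simp only [List.mem_cons, List.not_mem_nil, or_false] at hp
        rcases hp with h | h
        · rw [h] at hp1; simp at hp1
        · rw [h]; simpa using by omega
      · rw [if_neg hn] at hp; simp at hp
    have hinf : {n | w n = true}.Infinite :=
      hS.mono (fun n hn => hn.1)
    have hw' := hw_nsOf w hinf
    set ns := nsOf w with hns
    -- the selected block indices
    set J : Set ℕ := {k | sel (bpos ns k) = true} with hJdef
    have hJB : ∀ k ∈ J, ns k ≤ B := by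
      intro k hk
      have hwk : w (bpos ns k) = true := (hw' _).2 ⟨k, rfl⟩
      have hout : ((false, nvals (opsOf w sel) (bpos ns k) false) : Bool × ℕ)
          ∈ nouts (opsOf w sel) (bpos ns k) := by
        rw [nouts_eq, if_pos ⟨hwk, hk⟩]; simp
      have := hB _ _ hout rfl
      rwa [vc_bpos w sel ns hw' k] at this
    have hJinf : J.Infinite := by
      have hsub : {n | w n = true ∧ sel n = true} ⊆ bpos ns '' J := by
        rintro n ⟨hwn, hseln⟩
        obtain ⟨k, hk⟩ := (hw' n).1 hwn
        exact ⟨k, by rw [hJdef]; simp only [Set.mem_setOf_eq]; rw [hk]; exact hseln, hk⟩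
      exact Set.Infinite.of_image _ (hS.mono hsub)
    obtain ⟨v, hv⟩ := pigeonhole ns B hJinf hJB
    exact ⟨ns, hw', v, hv⟩
  · -- Lsep → Accepts
    rintro ⟨ns, hw, v, hI⟩
    set sel : ℕ → Bool := fun n => decide (∃ k, bpos ns k = n ∧ ns k = v) with hsel
    have hselw : ∀ n, sel n = true → w n = true := by
      intro n hn
      rw [hsel, decide_eq_true_iff] at hn
      obtain ⟨k, hk, _⟩ := hn
      exact (hw n).2 ⟨k, hk⟩
    have hS : {n | w n = true ∧ sel n = true}.Infinite := by
      have himg : (bpos ns '' {i | ns i = v}).Infinite :=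
        hI.image ((bpos_strictMono ns).injective.injOn)
      refine himg.mono ?_
      rintro n ⟨k, hk, rfl⟩
      have hseln : sel (bpos ns k) = true := by
        rw [hsel, decide_eq_true_iff]; exact ⟨k, rfl, hk⟩
      exact ⟨hselw _ hseln, hseln⟩
    refine ⟨fun _ => (), opsOf w sel, rfl, fun n => opsOf_mem w sel n, ?_⟩
    show (∃ B, ∀ n, ∀ p ∈ nouts (opsOf w sel) n, p.1 = false → p.2 ≤ B) ∧
        ¬ (∃ B, ∀ n, ∀ p ∈ nouts (opsOf w sel) n, p.1 = true → p.2 ≤ B)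
    constructor
    · refine ⟨v, fun n p hp hp1 => ?_⟩
      rw [nouts_eq] at hp
      by_cases hn : w n = true ∧ sel n = true
      · rw [if_pos hn] at hp
        simp only [List.mem_cons, List.not_mem_nil, or_false] at hp
        rcases hp with h | h
        · have hsn := hn.2
          rw [hsel, decide_eq_true_iff] at hsn
          obtain ⟨k, hk, hkv⟩ := hsn
          rw [h]
          subst hk
          rw [vc_bpos w sel ns hw k, hkv]
        · rw [h] at hp1; simp at hp1
      · rw [if_neg hn] at hp; simp at hp
    · rintro ⟨B, hB⟩
      obtain ⟨n, hn, hBn⟩ := ve_unbounded w sel hS B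
      have hout : ((true, nvals (opsOf w sel) n true + 1) : Bool × ℕ)
          ∈ nouts (opsOf w sel) n := by
        rw [nouts_eq, if_pos hn]; simp
      have := hB _ _ hout rfl
      omega
end MaxReg
end

section
/- Every language over a finite alphabet Σ recognized by a deterministic max-automaton is a boolean combination of Σ₂ subsets of Σ^ω. -/
namespace MaxReg

/-- Runs and counter valuations only depend on the letters read so far. -/
lemma run_vals_agree {α : Type} (A : MaxAutomaton α) (q : A.Q) (w w' : ℕ → α) :
    ∀ n, (∀ k, k < n → w k = w' k) →
      A.runFrom q w n = A.runFrom q w' n ∧ A.valsFrom q w n = A.valsFrom q w' n := by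
  intro n
  induction n with
  | zero => intro _; exact ⟨rfl, rfl⟩
  | succ n ih =>
      intro h
      obtain ⟨h1, h2⟩ := ih (fun k hk => h k (Nat.lt_succ_of_lt hk))
      have hw : w n = w' n := h n (Nat.lt_succ_self n)
      constructor
      · show (A.δ (A.runFrom q w n) (w n)).1 = _
        rw [h1, hw]; rfl
      · show (applyOps (A.δ (A.runFrom q w n) (w n)).2 (A.valsFrom q w n)).1 = _
        rw [h1, h2, hw]; rfl

lemma outs_agree {α : Type} (A : MaxAutomaton α) (q : A.Q) (w w' : ℕ → α)
    (n : ℕ) (h : ∀ k, k ≤ n → w k = w' k) :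
    A.outsFrom q w n = A.outsFrom q w' n := by
  obtain ⟨h1, h2⟩ := run_vals_agree A q w w' n (fun k hk => h k (Nat.le_of_lt hk))
  show (applyOps (A.δ (A.runFrom q w n) (w n)).2 (A.valsFrom q w n)).2 = _
  rw [h1, h2, h n le_rfl]; rfl

lemma isClosed_step {α : Type} [TopologicalSpace α] [DiscreteTopology α]
    (A : MaxAutomaton α) (c : A.C) (B n : ℕ) :
    IsClosed { w : ℕ → α | ∀ p ∈ A.outsFrom A.init w n, p.1 = c → p.2 ≤ B } := by
  rw [← isOpen_compl_iff]
  rw [isOpen_iff_mem_nhds]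
  intro w hw
  rw [mem_nhds_iff]
  refine ⟨⋂ k ∈ Finset.range (n + 1), { w' : ℕ → α | w' k = w k }, ?_, ?_, ?_⟩
  · intro w' hw'
    simp only [Set.mem_iInter] at hw'
    have hag : A.outsFrom A.init w' n = A.outsFrom A.init w n :=
      outs_agree A A.init w' w n (fun k hk => hw' k (Finset.mem_range.mpr (Nat.lt_succ_of_le hk)))
    simp only [Set.mem_compl_iff, Set.mem_setOf_eq] at hw ⊢
    intro h
    exact hw (hag ▸ h)
  · apply isOpen_biInter_finset
    intro k _
    show IsOpen ((fun w' : ℕ → α => w' k) ⁻¹' {w k})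
    exact IsOpen.preimage (continuous_apply k) (isOpen_discrete ({w k} : Set α))
  · simp

lemma bounded_isSigma2 {α : Type} [TopologicalSpace α] [DiscreteTopology α]
    (A : MaxAutomaton α) (c : A.C) :
    IsSigma2 { w : ℕ → α | A.BoundedFrom A.init w c } := by
  refine ⟨fun B => { w | ∀ n, ∀ p ∈ A.outsFrom A.init w n, p.1 = c → p.2 ≤ B }, ?_, ?_⟩
  · intro B
    dsimp only
    have : { w : ℕ → α | ∀ n, ∀ p ∈ A.outsFrom A.init w n, p.1 = c → p.2 ≤ B }
        = ⋂ n, { w | ∀ p ∈ A.outsFrom A.init w n, p.1 = c → p.2 ≤ B } := by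
      ext w; simp [Set.mem_iInter]
    rw [this]
    exact isClosed_iInter (fun n => isClosed_step A c B n)
  · ext w
    simp only [Set.mem_iUnion, Set.mem_setOf_eq]
    rfl

lemma bc_boolComb {σ X : Type} [TopologicalSpace X] (φ : BC σ) (S : σ → Set X)
    (h : ∀ a, IsBoolCombSigma2 (S a)) :
    IsBoolCombSigma2 { x | φ.eval (fun a => x ∈ S a) } := by
  induction φ with
  | tt =>
      have : { x : X | BC.eval (fun a => x ∈ S a) .tt } = Set.univ := by
        ext x; simp [BC.eval]
      rw [this]
      exact .base ⟨fun _ => Set.univ, fun _ => isClosed_univ, (Set.iUnion_const Set.univ).symm⟩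
  | atom a => exact h a
  | nt φ ih =>
      have : { x : X | BC.eval (fun a => x ∈ S a) (.nt φ) }
          = { x | BC.eval (fun a => x ∈ S a) φ }ᶜ := rfl
      rw [this]
      exact .compl ih
  | an φ ψ ihφ ihψ =>
      have : { x : X | BC.eval (fun a => x ∈ S a) (.an φ ψ) }
          = { x | BC.eval (fun a => x ∈ S a) φ } ∩ { x | BC.eval (fun a => x ∈ S a) ψ } := rfl
      rw [this]
      exact .inter ihφ ihψ

/-- Every language recognized by a deterministic max-automaton
over a finite alphabet is a boolean combination of `Σ₂` subsets of `α^ω`. -/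
theorem maxAutomaton_boolCombSigma2 {α : Type} [Fintype α]
    [TopologicalSpace α] [DiscreteTopology α] (A : MaxAutomaton α) :
    IsBoolCombSigma2 A.Lang := by
  have := bc_boolComb A.acc (fun c => { w : ℕ → α | A.BoundedFrom A.init w c })
    (fun c => .base (bounded_isSigma2 A c))
  convert this using 1
  rfl

end MaxReg
end
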